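/- For every integer k ≥ 2 and every n ∈ ℕ, C_k(n) ≥ Σ_{p=0}^{n} C_{k−1}(n−p)^(p+1). -/

import Mathlib

/-- Simon's congruence: `x ∼ₙ y` iff `x` and `y` have the same subwords
(scattered subsequences) of length at most `n`. -/
def SimonCong {α : Type*} (n : ℕ) (x y : List α) : Prop :=
  ∀ w : List α, w.length ≤ n → (w.Sublist x ↔ w.Sublist y)

/-- Simon's congruence as a setoid on words over `α`. -/
def simonSetoid (α : Type*) (n : ℕ) : Setoid (List α) :=
  ⟨SimonCong n,
    ⟨fun _ _ _ => Iff.rfl,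
     fun h w hw => (h w hw).symm,
     fun h1 h2 w hw => (h1 w hw).trans (h2 w hw)⟩⟩

/-- `simonIndex k n` is `C_k(n)`, the number of equivalence classes of
Simon's congruence `∼ₙ` over a `k`-letter alphabet. -/
noncomputable def simonIndex (k n : ℕ) : ℕ :=
  Nat.card (Quotient (simonSetoid (Fin k) n))

namespace SimonAux

variable {α : Type*} {β : Type*} [DecidableEq α]

lemma auxA {a : α} {t u w : List α} (hu : a ∉ u) (h : (a :: t).Sublist (u ++ a :: w)) :
    t.Sublist w := by
  induction u with
  | nil =>
    rcases List.cons_sublist_cons'.mp h with h' | ⟨_, h'⟩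
    · exact (List.sublist_cons_self a t).trans h'
    · exact h'
  | cons c u ih =>
    rcases List.cons_sublist_cons'.mp h with h' | ⟨rfl, h'⟩
    · exact ih (fun hm => hu (List.mem_cons_of_mem _ hm)) h'
    · exact absurd List.mem_cons_self hu

lemma auxD {a : α} {x t u w : List α} (hx : a ∉ x) (hu : a ∉ u)
    (hc : w.count a ≤ t.count a) (h : (x ++ a :: t).Sublist (u ++ a :: w)) :
    x.Sublist u := by
  induction u generalizing x with
  | nil =>
    cases x with
    | nil => exact List.nil_sublist _
    | cons b x' =>
      exfalso
      have hb : b ≠ a := fun e => hx (e ▸ List.mem_cons_self)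
      rw [List.cons_append] at h
      rcases List.cons_sublist_cons'.mp h with h' | ⟨rfl, _⟩
      · have := h'.count_le a
        simp [List.count_append, List.count_cons, hb] at this
        omega
      · exact hb rfl
  | cons c u' ih =>
    cases x with
    | nil => exact List.nil_sublist _
    | cons b x' =>
      rw [List.cons_append] at h
      rcases List.cons_sublist_cons'.mp h with h' | ⟨rfl, h'⟩
      · exact (ih hx (fun hm => hu (List.mem_cons_of_mem _ hm))
          (by rwa [List.cons_append])).trans (List.sublist_cons_self _ _)
      · exact (ih (fun hm => hx (List.mem_cons_of_mem _ hm))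
          (fun hm => hu (List.mem_cons_of_mem _ hm)) h').cons₂ _
          

def glue (a : α) (ι : β → α) : (p : ℕ) → (Fin (p + 1) → List β) → List α
  | 0, f => (f 0).map ι
  | (p+1), f => (f 0).map ι ++ a :: glue a ι p (fun i => f i.succ)

variable {a : α} {ι : β → α}

lemma not_mem_map (hι : ∀ b, ι b ≠ a) (u : List β) : a ∉ u.map ι := by
  intro h
  rcases List.mem_map.mp h with ⟨b, _, hb⟩
  exact hι b hb

lemma glue_count (hι : ∀ b, ι b ≠ a) : ∀ (p : ℕ) (f : Fin (p + 1) → List β), (glue a ι p f).count a = p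
  | 0, f => List.count_eq_zero_of_not_mem (not_mem_map hι _)
  | (p+1), f => by
    rw [glue, List.count_append, List.count_cons_self,
      List.count_eq_zero_of_not_mem (not_mem_map hι (f 0)), glue_count hι p]
    omega

lemma glue_replicate : ∀ (p : ℕ) (f : Fin (p + 1) → List β),
    (List.replicate p a).Sublist (glue a ι p f)
  | 0, f => List.nil_sublist _
  | (p+1), f => by
    rw [List.replicate_succ, glue]
    exact ((glue_replicate p _).cons₂ a).trans (List.sublist_append_right _ _)

lemma glue_forward : ∀ (p : ℕ) (f : Fin (p + 1) → List β) (i : ℕ) (hi : i ≤ p)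
    {v : List β} (hv : v.Sublist (f ⟨i, by omega⟩)),
    (List.replicate i a ++ v.map ι ++ List.replicate (p - i) a).Sublist (glue a ι p f)
  | 0, f, 0, _, v, hv => by
    simpa [glue] using hv.map ι
  | (p+1), f, 0, _, v, hv => by
    simp only [List.replicate_zero, List.nil_append, Nat.sub_zero, List.replicate_succ, glue]
    refine List.Sublist.append (hv.map ι) ?_
    exact (glue_replicate p _).cons₂ a
  | (p+1), f, (j+1), hj, v, hv => by
    simp only [List.replicate_succ, List.cons_append, Nat.succ_sub_succ, glue]
    refine List.Sublist.trans ?_ (List.sublist_append_right _ _)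
    refine List.Sublist.cons₂ a ?_
    exact glue_forward p (fun i => f i.succ) j (by omega) hv

lemma glue_backward (hι : ∀ b, ι b ≠ a) (hinj : Function.Injective ι) :
    ∀ (p : ℕ) (f : Fin (p + 1) → List β) (i : ℕ) (hi : i ≤ p) {v : List β}
    (h : (List.replicate i a ++ v.map ι ++ List.replicate (p - i) a).Sublist (glue a ι p f)),
    v.Sublist (f ⟨i, by omega⟩)
  | 0, f, 0, _, v, h => by
    simp only [List.replicate_zero, List.nil_append, Nat.sub_zero, List.append_nil, glue] at h
    rcases List.sublist_map_iff.mp h with ⟨l', hl', he⟩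
    rwa [List.map_injective_iff.mpr hinj he]
  | (p+1), f, 0, _, v, h => by
    simp only [List.replicate_zero, List.nil_append, Nat.sub_zero, List.replicate_succ, glue] at h
    have hx := auxD (not_mem_map hι v) (not_mem_map hι (f 0))
      (by rw [glue_count hι, List.count_replicate_self]) h
    rcases List.sublist_map_iff.mp hx with ⟨l', hl', he⟩
    rwa [List.map_injective_iff.mpr hinj he]
  | (p+1), f, (j+1), hj, v, h => by
    simp only [List.replicate_succ, List.cons_append, Nat.succ_sub_succ, glue] at h
    exact glue_backward hι hinj p (fun i : Fin (p + 1) => f i.succ) j (by omega)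
      (auxA (not_mem_map hι (f 0)) h)

end SimonAux

lemma simon_finite (m n : ℕ) : Finite (Quotient (simonSetoid (Fin m) n)) := by
  have hfin : Finite {l : List (Fin m) // l.length ≤ n} :=
    (List.finite_length_le (Fin m) n).to_subtype
  let g : Quotient (simonSetoid (Fin m) n) → ({l : List (Fin m) // l.length ≤ n} → Prop) :=
    Quotient.lift (fun x w => w.1.Sublist x)
      (fun x y h => funext fun w => propext (h w.1 w.2))
  have hg : Function.Injective g := by
    intro q q'
    induction q using Quotient.ind
    induction q' using Quotient.ind
    intro h
    exact Quotient.sound fun w hw => iff_of_eq (congrFun h ⟨w, hw⟩)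
  exact Finite.of_injective g hg

theorem simon_index_ge_sum (k n : ℕ) (hk : 2 ≤ k) :
    simonIndex k n ≥ ∑ p ∈ Finset.range (n + 1), simonIndex (k - 1) (n - p) ^ (p + 1) := by
  classical
  haveI : ∀ m n', Finite (Quotient (simonSetoid (Fin m) n')) := simon_finite
  set a : Fin k := ⟨k - 1, by omega⟩ with ha
  set ι : Fin (k - 1) → Fin k := Fin.castLE (by omega) with hiota
  have hι : ∀ b, ι b ≠ a := by
    intro b he
    have : (ι b).val = k - 1 := by rw [he]
    simp [hiota, Fin.coe_castLE] at this
    omega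
  have hinjι : Function.Injective ι := Fin.castLE_injective _
  let F : ((p : Fin (n + 1)) × (Fin (p.1 + 1) → Quotient (simonSetoid (Fin (k - 1)) (n - p.1)))) →
      Quotient (simonSetoid (Fin k) n) := fun s =>
    Quotient.mk _ (SimonAux.glue a ι s.1.1 (fun i => (s.2 i).out))
  have hinj : Function.Injective F := by
    rintro ⟨p, f⟩ ⟨p', f'⟩ hF
    have h : SimonCong n (SimonAux.glue a ι p.1 (fun i => ((f i)).out))
        (SimonAux.glue a ι p'.1 (fun i => ((f' i)).out)) := Quotient.exact hF
    -- step 1 : p = p'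
    have hpp : ∀ (q q' : Fin (n + 1)) (g : Fin (q.1 + 1) → List (Fin (k - 1))) (g' : Fin (q'.1 + 1) → List (Fin (k - 1))),
        SimonCong n (SimonAux.glue a ι q.1 g) (SimonAux.glue a ι q'.1 g') → q.1 ≤ q'.1 := by
      intro q q' g g' hcong
      have h1 : (List.replicate q.1 a).Sublist (SimonAux.glue a ι q.1 g) :=
        SimonAux.glue_replicate q.1 g
      have h2 := (hcong _ (by simp [List.length_replicate]; omega)).mp h1
      have := h2.count_le a
      rwa [List.count_replicate_self, SimonAux.glue_count hι] at this
    have hpe : p = p' := Fin.ext (le_antisymm (hpp p p' _ _ h) (hpp p' p _ _ (fun w hw => (h w hw).symm)))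
    subst hpe
    have hfe : f = f' := by
      funext i
      have hcong : SimonCong (n - p.1) (f i).out (f' i).out := by
        intro v hv
        have hlen : (List.replicate i.1 a ++ v.map ι ++ List.replicate (p.1 - i.1) a).length ≤ n := by
          simp [List.length_append, List.length_replicate, List.length_map]
          have := i.is_le
          have := p.is_le
          omega
        constructor
        · intro hvf
          have hfwd := SimonAux.glue_forward (a := a) (ι := ι) p.1 (fun j => (f j).out) i.1 i.is_le
            (v := v) (by simpa [Fin.eta] using hvf)
          have := (h _ hlen).mp hfwd
          simpa [Fin.eta] using SimonAux.glue_backward hι hinjι p.1 (fun j => (f' j).out)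
            i.1 i.is_le this
        · intro hvf
          have hfwd := SimonAux.glue_forward (a := a) (ι := ι) p.1 (fun j => (f' j).out) i.1 i.is_le
            (v := v) (by simpa [Fin.eta] using hvf)
          have := (h _ hlen).mpr hfwd
          simpa [Fin.eta] using SimonAux.glue_backward hι hinjι p.1 (fun j => (f j).out)
            i.1 i.is_le this
      calc f i = Quotient.mk _ (f i).out := (Quotient.out_eq _).symm
        _ = Quotient.mk _ (f' i).out := Quotient.sound hcong
        _ = f' i := Quotient.out_eq _
    rw [hfe]
  have h1 : Nat.card ((p : Fin (n + 1)) × (Fin (p.1 + 1) → Quotient (simonSetoid (Fin (k - 1)) (n - p.1)))) ≤ Nat.card (Quotient (simonSetoid (Fin k) n)) :=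
    Nat.card_le_card_of_injective F hinj
  have h2 : Nat.card ((p : Fin (n + 1)) × (Fin (p.1 + 1) → Quotient (simonSetoid (Fin (k - 1)) (n - p.1)))) = ∑ p ∈ Finset.range (n + 1), simonIndex (k - 1) (n - p) ^ (p + 1) := by
    haveI inst : ∀ p : Fin (n + 1), Fintype (Quotient (simonSetoid (Fin (k - 1)) (n - p.1))) :=
      fun p => Fintype.ofFinite _
    rw [Nat.card_eq_fintype_card, Fintype.card_sigma]
    rw [← Fin.sum_univ_eq_sum_range (fun p => simonIndex (k - 1) (n - p) ^ (p + 1))]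
    refine Finset.sum_congr rfl ?_
    intro p _
    rw [Fintype.card_fun, Fintype.card_fin, simonIndex, Nat.card_eq_fintype_card]
  rw [ge_iff_le, ← h2]
  exact h1.trans_eq rfl
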